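/- Let 0 = F₋₁C ⊆ F₀C ⊆ F₁C ⊆ ⋯ be an increasing filtration of a chain complex C of ℚ-vector spaces by subcomplexes, and suppose that for every i ≥ 0 and every k ≥ 0 the map H_k(F_iC) → H_k(F_{i+1}C) induced by the inclusion is the zero map. Then the E¹-page of the spectral sequence of the filtered complex is exact and the spectral sequence collapses with E²_{s,t} = 0 for all s,t. Concretely: for every s ≥ 0 and every k, the three-term sequence H_{k+1}(F_{s+1}C/F_sC) → H_k(F_sC/F_{s−1}C) → H_{k−1}(F_{s−1}C/F_{s−2}C) (with the convention F_jC = 0 for j < 0) is exact at the middle term, where each map is the composite of the connecting homomorphism δ of the short exact sequence of complexes 0 → F_sC → F_{s+1}C → F_{s+1}C/F_sC → 0 with the map on homology induced by the quotient projection F_sC → F_sC/F_{s−1}C. -/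

import Mathlib

open CategoryTheory CategoryTheory.Limits

noncomputable section

/-- The short exact sequence of chain complexes `0 → F i → F (i+1) → F (i+1)/F i → 0`,
where the quotient is taken as the cokernel of the inclusion. -/
def filtrationSC (F : ℤ → ChainComplex (ModuleCat ℚ) ℤ)
    (ι : ∀ i : ℤ, F i ⟶ F (i + 1)) (i : ℤ) :
    ShortComplex (ChainComplex (ModuleCat ℚ) ℤ) :=
  ShortComplex.mk (ι i) (cokernel.π (ι i)) (cokernel.condition _)

/-- The map `H_i(F (s+1)/F s) → H_j(F s/F (s−1))` (for `j + 1 = i`) on the `E¹`-page of the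
spectral sequence of the filtration: the connecting homomorphism `δ` of the short exact
sequence `0 → F s → F (s+1) → F (s+1)/F s → 0` composed with the map on homology induced by
the quotient projection `F s → F s/F (s−1)`. -/
def grConnecting (F : ℤ → ChainComplex (ModuleCat ℚ) ℤ)
    (ι : ∀ i : ℤ, F i ⟶ F (i + 1))
    (hSES : ∀ i : ℤ, (filtrationSC F ι i).ShortExact)
    (s i j : ℤ) (hij : j + 1 = i) :
    ((cokernel (ι s)).homology i) ⟶ ((cokernel (ι (s - 1))).homology j) :=
  (hSES s).δ i j hij ≫
    HomologicalComplex.homologyMap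
      (eqToHom (congrArg F (by omega : s = s - 1 + 1)) ≫ cokernel.π (ι (s - 1))) j

lemma homologyMap_eqToHom_bijective (A B : ChainComplex (ModuleCat ℚ) ℤ) (p : A = B) (n : ℤ) :
    Function.Bijective (HomologicalComplex.homologyMap (eqToHom p) n) := by
  subst p
  simp only [eqToHom_refl, HomologicalComplex.homologyMap_id]
  constructor
  · intro a b h
    simpa using h
  · intro b
    exact ⟨b, by simp⟩

/-- Proposition 2.8: if `0 = F₋₁C ⊆ F₀C ⊆ F₁C ⊆ ⋯` is a filtration of a chain complex `C`
of `ℚ`-vector spaces (supported in nonnegative degrees) by subcomplexes such that every map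
`H_k(F_iC) → H_k(F_{i+1}C)` (for `i, k ≥ 0`) is zero, then the `E¹`-page of the associated
spectral sequence is exact, i.e. `E²_{s,t} = 0`: each three-term sequence
`H_{k+1}(F_{s+1}C/F_sC) → H_k(F_sC/F_{s−1}C) → H_{k−1}(F_{s−1}C/F_{s−2}C)` is exact at the
middle term. -/
theorem proposition_2_8
    (C : ChainComplex (ModuleCat ℚ) ℤ)
    (F : ℤ → ChainComplex (ModuleCat ℚ) ℤ)
    (ι : ∀ i : ℤ, F i ⟶ F (i + 1))
    (incl : ∀ i : ℤ, F i ⟶ C)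
    (hcompat : ∀ i : ℤ, ι i ≫ incl (i + 1) = incl i)
    -- `F j = 0` for `j < 0`
    (hFneg : ∀ i : ℤ, i < 0 → IsZero (F i))
    -- the complexes are supported in non-negative degrees
    (hdegneg : ∀ (i n : ℤ), n < 0 → IsZero ((F i).X n))
    -- the filtration consists of subcomplexes: all maps are degreewise injective
    (hmono : ∀ (i n : ℤ), Mono ((ι i).f n))
    (hinclmono : ∀ (i n : ℤ), Mono ((incl i).f n))
    (hSES : ∀ i : ℤ, (filtrationSC F ι i).ShortExact)
    -- every map `H_k(F_iC) → H_k(F_{i+1}C)` is zero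
    (hvanish : ∀ i : ℤ, 0 ≤ i → ∀ k : ℤ, 0 ≤ k →
      HomologicalComplex.homologyMap (ι i) k = 0)
    (s : ℤ) (hs : 0 ≤ s) (k : ℤ) :
    (∀ x : (cokernel (ι s)).homology (k + 1),
      grConnecting F ι hSES (s - 1) k (k - 1) (by omega)
        (grConnecting F ι hSES s (k + 1) k rfl x) = 0) ∧
    (∀ y : (cokernel (ι (s - 1))).homology k,
      grConnecting F ι hSES (s - 1) k (k - 1) (by omega) y = 0 →
      ∃ x : (cokernel (ι s)).homology (k + 1),
        grConnecting F ι hSES s (k + 1) k rfl x = y) := by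
  -- every map on homology induced by `ι i` is zero, for all `i` and all degrees
  have hz : ∀ (i n : ℤ), HomologicalComplex.homologyMap (ι i) n = 0 := by
    intro i n
    by_cases hn : n < 0
    · have h2 : (F i).ExactAt n := by
        rw [HomologicalComplex.exactAt_iff]
        exact ShortComplex.exact_of_isZero_X₂ _ (hdegneg i n hn)
      have h3 := ((F i).exactAt_iff_isZero_homology n).mp h2
      exact h3.eq_of_src _ _
    · by_cases hi : i < 0
      · have : ι i = 0 := (hFneg i hi).eq_of_src _ _
        rw [this, HomologicalComplex.homologyMap_zero]
      · exact hvanish i (by omega) n (by omega)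
  constructor
  · -- the composite of two consecutive `E¹`-differentials is zero
    intro x
    have h1 : HomologicalComplex.homologyMap (cokernel.π (ι (s - 1))) k ≫
        (hSES (s - 1)).δ k (k - 1) (show k - 1 + 1 = k by omega) = 0 :=
      (hSES (s - 1)).comp_δ k (k - 1) (show k - 1 + 1 = k by omega)
    have hc : grConnecting F ι hSES s (k + 1) k rfl ≫
        grConnecting F ι hSES (s - 1) k (k - 1) (by omega) = 0 := by
      dsimp only [grConnecting]
      show ((hSES s).δ (k + 1) k (by simp) ≫ HomologicalComplex.homologyMap
          (eqToHom (congrArg F (by omega : s = s - 1 + 1)) ≫ cokernel.π (ι (s - 1))) k) ≫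
        ((hSES (s - 1)).δ k (k - 1) (by simp) ≫ HomologicalComplex.homologyMap
          (eqToHom (congrArg F (by omega : s - 1 = s - 1 - 1 + 1)) ≫
            cokernel.π (ι (s - 1 - 1))) (k - 1)) = 0
      have e : ∀ {A B C D E : ModuleCat ℚ} (a : A ⟶ B) (b : B ⟶ C) (c : C ⟶ D) (d : D ⟶ E),
          b ≫ c = 0 → (a ≫ b) ≫ c ≫ d = 0 := by
        intro A B C D E a b c d h
        rw [Category.assoc, reassoc_of% h, zero_comp, comp_zero]
      exact e _ _ _ _ ((congrArg (fun f => f ≫ _) (HomologicalComplex.homologyMap_comp _ _ k)).trans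
        ((Category.assoc _ _ _).trans ((congrArg (fun f => _ ≫ f) h1).trans comp_zero)))
    have := ConcreteCategory.congr_hom hc x
    simpa using this
  · -- exactness at the middle term
    intro y hy
    rw [grConnecting, HomologicalComplex.homologyMap_comp] at hy
    have hy' : HomologicalComplex.homologyMap (cokernel.π (ι (s - 1 - 1))) (k - 1)
        (HomologicalComplex.homologyMap
          (eqToHom (congrArg F (show s - 1 = s - 1 - 1 + 1 by omega))) (k - 1)
          ((hSES (s - 1)).δ k (k - 1) (show k - 1 + 1 = k by omega) y)) = 0 := hy
    -- Step A: the connecting map kills `y`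
    have hex2 : ∀ (z : (F (s - 1 - 1 + 1)).homology (k - 1)),
        HomologicalComplex.homologyMap (cokernel.π (ι (s - 1 - 1))) (k - 1) z = 0 →
        ∃ w : (F (s - 1 - 1)).homology (k - 1),
          HomologicalComplex.homologyMap (ι (s - 1 - 1)) (k - 1) w = z := by
      have h := (hSES (s - 1 - 1)).homology_exact₂ (k - 1)
      rw [ShortComplex.moduleCat_exact_iff] at h
      exact h
    obtain ⟨w, hw⟩ := hex2 _ hy'
    rw [hz (s - 1 - 1) (k - 1)] at hw
    have hδy : (hSES (s - 1)).δ k (k - 1) (show k - 1 + 1 = k by omega) y = 0 := by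
      apply (homologyMap_eqToHom_bijective (F (s - 1)) (F (s - 1 - 1 + 1))
        (congrArg F (show s - 1 = s - 1 - 1 + 1 by omega)) (k - 1)).injective
      rw [← hw]
      simp only [map_zero]
      exact (map_zero _).symm
    -- Step B: `y` is in the image of the projection from `H_k (F (s - 1 + 1))`
    have hex3 : ∀ (z : (cokernel (ι (s - 1))).homology k),
        (hSES (s - 1)).δ k (k - 1) (show k - 1 + 1 = k by omega) z = 0 →
        ∃ u : (F (s - 1 + 1)).homology k,
          HomologicalComplex.homologyMap (cokernel.π (ι (s - 1))) k u = z := by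
      have h := (hSES (s - 1)).homology_exact₃ k (k - 1) (show k - 1 + 1 = k by omega)
      rw [ShortComplex.moduleCat_exact_iff] at h
      exact h
    obtain ⟨u', hu'⟩ := hex3 y hδy
    -- Step C: pull back along the eqToHom iso and use vanishing + exactness
    obtain ⟨u, hu⟩ := (homologyMap_eqToHom_bijective (F s) (F (s - 1 + 1))
      (congrArg F (show s = s - 1 + 1 by omega)) k).surjective u'
    have hex1 : ∀ (v : (F s).homology k),
        HomologicalComplex.homologyMap (ι s) k v = 0 →
        ∃ x : (cokernel (ι s)).homology (k + 1),
          (hSES s).δ (k + 1) k rfl x = v := by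
      have h := (hSES s).homology_exact₁ (k + 1) k rfl
      rw [ShortComplex.moduleCat_exact_iff] at h
      exact h
    have hu0 : HomologicalComplex.homologyMap (ι s) k u = 0 := by
      rw [hz]
      rfl
    obtain ⟨x, hx⟩ := hex1 u hu0
    refine ⟨x, ?_⟩
    rw [grConnecting, HomologicalComplex.homologyMap_comp]
    show HomologicalComplex.homologyMap (cokernel.π (ι (s - 1))) k
      (HomologicalComplex.homologyMap
        (eqToHom (congrArg F (show s = s - 1 + 1 by omega))) k
        ((hSES s).δ (k + 1) k rfl x)) = y
    rw [hx, hu]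
    exact hu'

end
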